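/- Let 0 < R < H, a = √(H² − R²), α = R/(H + a), and k₀ ∈ ℝ. Define Y(σ) = −(a/2)·((1 + ασ)/(1 − ασ) + (σ + α)/(σ − α)), X′(σ) = −i·a·α·(1/(1 − ασ)² + 1/(σ − α)²), and Y′(σ) = −a·α·(1/(1 − ασ)² − 1/(σ − α)²). Then the circle integral over the unit circle satisfies ∮_{|σ|=1} ( −Y(σ)·(k₀·Y′(σ) − i·X′(σ)) ) dσ = −π·i·R², i.e. the σ^{−1} Laurent coefficient E_{−1} = (1/(2πi))·∮_{|σ|=1} −y(ασ)·(k₀·dy/dσ − i·dx/dσ) dσ equals −R²/2. (This is the identity E_{−1} = −R²/2 that reconciles the coefficient condition A_{−1} − B_{−1} = γE_{−1} of Eq. (4.10c) with the far-field equilibrium condition A_{−1} − B_{−1} = −γR²/2 of Eq. (4.10c′).) -/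

import Mathlib

open Complex

/-- `y(ασ)`, the vertical coordinate of the tunnel periphery point. -/
noncomputable def Yf (a α : ℝ) (σ : ℂ) : ℂ :=
  -((a : ℂ) / 2) * ((1 + (α : ℂ) * σ) / (1 - (α : ℂ) * σ) + (σ + (α : ℂ)) / (σ - (α : ℂ)))

/-- `dx(ασ)/dσ`. -/
noncomputable def Xd (a α : ℝ) (σ : ℂ) : ℂ :=
  -Complex.I * a * α * (1 / (1 - (α : ℂ) * σ) ^ 2 + 1 / (σ - (α : ℂ)) ^ 2)

/-- `dy(ασ)/dσ`. -/
noncomputable def Yd (a α : ℝ) (σ : ℂ) : ℂ :=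
  -(a : ℂ) * α * (1 / (1 - (α : ℂ) * σ) ^ 2 - 1 / (σ - (α : ℂ)) ^ 2)

lemma myCircleIntegrable.const_mul {f : ℂ → ℂ} {c : ℂ} {r : ℝ}
    (hf : CircleIntegrable f c r) (A : ℂ) :
    CircleIntegrable (fun z => A * f z) c r :=
  IntervalIntegrable.const_mul hf A

lemma myCircleIntegral_add {f g : ℂ → ℂ} {c : ℂ} {r : ℝ}
    (hf : CircleIntegrable f c r) (hg : CircleIntegrable g c r) :
    (∮ z in C(c, r), (f z + g z)) = (∮ z in C(c, r), f z) + ∮ z in C(c, r), g z := by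
  simp only [circleIntegral, smul_add, intervalIntegral.integral_add hf.out hg.out]

lemma mySub_inv_outside {w : ℂ} (hw : 1 < ‖w‖) :
    (∮ z in C((0 : ℂ), 1), (z - w)⁻¹) = 0 := by
  have hne : ∀ z ∈ Metric.closedBall (0 : ℂ) 1, z - w ≠ 0 := by
    intro z hz
    rw [Metric.mem_closedBall, dist_zero_right] at hz
    intro h
    rw [sub_eq_zero] at h
    subst h
    exact absurd hz (not_le.2 hw)
  have hd : ∀ z, z - w ≠ 0 → DifferentiableAt ℂ (fun z : ℂ => (z - w)⁻¹) z := fun z h =>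
    ((differentiableAt_id.sub_const w).inv h)
  refine Complex.circleIntegral_eq_zero_of_differentiable_on_off_countable zero_le_one
    Set.countable_empty ?_ ?_
  · exact fun z hz => ((hd z (hne z hz)).differentiableWithinAt).continuousWithinAt
  · intro z hz
    exact hd z (hne z (Metric.ball_subset_closedBall hz.1))

/-- Circle integral of a six-term partial fraction expansion with one simple pole inside. -/
lemma mySix (β w c₁ c₂ c₃ d₁ d₂ d₃ : ℂ) (hβ : ‖β‖ < 1) (hw : 1 < ‖w‖) :
    (∮ z in C((0 : ℂ), 1),
      (c₁ * (z - β) ^ (-1 : ℤ) + (c₂ * (z - β) ^ (-2 : ℤ) + c₃ * (z - β) ^ (-3 : ℤ)) +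
        (d₁ * (z - w) ^ (-1 : ℤ) + (d₂ * (z - w) ^ (-2 : ℤ) + d₃ * (z - w) ^ (-3 : ℤ))))) =
      c₁ * (2 * Real.pi * Complex.I) := by
  have hβs : β ∉ Metric.sphere (0 : ℂ) |(1 : ℝ)| := by
    simp only [abs_one, Metric.mem_sphere, dist_zero_right]
    exact fun h => absurd h hβ.ne
  have hws : w ∉ Metric.sphere (0 : ℂ) |(1 : ℝ)| := by
    simp only [abs_one, Metric.mem_sphere, dist_zero_right]
    exact fun h => absurd h.symm hw.ne
  have hβball : β ∈ Metric.ball (0 : ℂ) 1 := by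
    simpa [Metric.mem_ball, dist_zero_right] using hβ
  have ib : ∀ n : ℤ, CircleIntegrable (fun z : ℂ => (z - β) ^ n) 0 1 :=
    fun n => circleIntegrable_sub_zpow_iff.2 (Or.inr (Or.inr hβs))
  have iw : ∀ n : ℤ, CircleIntegrable (fun z : ℂ => (z - w) ^ n) 0 1 :=
    fun n => circleIntegrable_sub_zpow_iff.2 (Or.inr (Or.inr hws))
  have i1 : CircleIntegrable (fun z : ℂ => c₁ * (z - β) ^ (-1 : ℤ)) 0 1 :=
    myCircleIntegrable.const_mul (ib _) c₁
  have i2 : CircleIntegrable (fun z : ℂ => c₂ * (z - β) ^ (-2 : ℤ)) 0 1 :=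
    myCircleIntegrable.const_mul (ib _) c₂
  have i3 : CircleIntegrable (fun z : ℂ => c₃ * (z - β) ^ (-3 : ℤ)) 0 1 :=
    myCircleIntegrable.const_mul (ib _) c₃
  have j1 : CircleIntegrable (fun z : ℂ => d₁ * (z - w) ^ (-1 : ℤ)) 0 1 :=
    myCircleIntegrable.const_mul (iw _) d₁
  have j2 : CircleIntegrable (fun z : ℂ => d₂ * (z - w) ^ (-2 : ℤ)) 0 1 :=
    myCircleIntegrable.const_mul (iw _) d₂
  have j3 : CircleIntegrable (fun z : ℂ => d₃ * (z - w) ^ (-3 : ℤ)) 0 1 :=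
    myCircleIntegrable.const_mul (iw _) d₃
  have i23 : CircleIntegrable
      (fun z : ℂ => c₂ * (z - β) ^ (-2 : ℤ) + c₃ * (z - β) ^ (-3 : ℤ)) 0 1 := i2.add i3
  have i123 : CircleIntegrable
      (fun z : ℂ => c₁ * (z - β) ^ (-1 : ℤ) +
        (c₂ * (z - β) ^ (-2 : ℤ) + c₃ * (z - β) ^ (-3 : ℤ))) 0 1 := i1.add i23
  have j23 : CircleIntegrable
      (fun z : ℂ => d₂ * (z - w) ^ (-2 : ℤ) + d₃ * (z - w) ^ (-3 : ℤ)) 0 1 := j2.add j3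
  have j123 : CircleIntegrable
      (fun z : ℂ => d₁ * (z - w) ^ (-1 : ℤ) +
        (d₂ * (z - w) ^ (-2 : ℤ) + d₃ * (z - w) ^ (-3 : ℤ))) 0 1 := j1.add j23
  rw [myCircleIntegral_add i123 j123, myCircleIntegral_add i1 i23,
    myCircleIntegral_add i2 i3, myCircleIntegral_add j1 j23, myCircleIntegral_add j2 j3]
  simp only [circleIntegral.integral_const_mul]
  rw [circleIntegral.integral_sub_zpow_of_ne (by decide : (-2 : ℤ) ≠ -1) 0 β 1,
    circleIntegral.integral_sub_zpow_of_ne (by decide : (-3 : ℤ) ≠ -1) 0 β 1,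
    circleIntegral.integral_sub_zpow_of_ne (by decide : (-2 : ℤ) ≠ -1) 0 w 1,
    circleIntegral.integral_sub_zpow_of_ne (by decide : (-3 : ℤ) ≠ -1) 0 w 1]
  have h1 : (∮ z in C((0 : ℂ), 1), (z - β) ^ (-1 : ℤ)) = 2 * Real.pi * Complex.I := by
    simp only [zpow_neg_one]
    exact circleIntegral.integral_sub_inv_of_mem_ball hβball
  have h2 : (∮ z in C((0 : ℂ), 1), (z - w) ^ (-1 : ℤ)) = 0 := by
    simp only [zpow_neg_one]
    exact mySub_inv_outside hw
  rw [h1, h2]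
  ring

set_option maxHeartbeats 1000000 in
/-- The identity `E_{−1} = −R²/2` reconciling Eq. (4.10c) with Eq. (4.10c′):
the circle integral of `−y(ασ)(k₀ y′(σ) − i x′(σ))` over the unit circle
equals `−πiR²`, i.e. the `σ^{−1}` Laurent coefficient
`E_{−1} = (1/(2πi)) ∮ −y(ασ)(k₀ dy/dσ − i dx/dσ) dσ` equals `−R²/2`. -/
theorem residue_E_neg_one (R H : ℝ) (hR : 0 < R) (hRH : R < H) (k₀ : ℝ)
    (a α : ℝ) (ha : a = Real.sqrt (H ^ 2 - R ^ 2)) (hα : α = R / (H + a)) :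
    (∮ σ in C(0, 1), (-(Yf a α σ) * ((k₀ : ℂ) * Yd a α σ - Complex.I * Xd a α σ)))
        = -Real.pi * Complex.I * R ^ 2 ∧
    (1 / (2 * Real.pi * Complex.I)) *
        (∮ σ in C(0, 1), (-(Yf a α σ) * ((k₀ : ℂ) * Yd a α σ - Complex.I * Xd a α σ)))
        = -(R ^ 2) / 2 := by
  have hH : 0 < H := hR.trans hRH
  have hsq : 0 < H ^ 2 - R ^ 2 := by nlinarith
  have hapos : 0 < a := by rw [ha]; exact Real.sqrt_pos.2 hsq
  have ha2 : a ^ 2 = H ^ 2 - R ^ 2 := by rw [ha]; exact Real.sq_sqrt hsq.le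
  have hHa : 0 < H + a := by linarith
  have hαpos : 0 < α := by rw [hα]; positivity
  have hα1 : α < 1 := by
    rw [hα, div_lt_one hHa]; linarith
  -- key real identity: 2 a α = R (1 - α²)
  have key : 2 * a * α = R * (1 - α ^ 2) := by
    rw [hα]
    field_simp
    linear_combination ha2
  -- complex setup
  have hβ0 : (α : ℂ) ≠ 0 := Complex.ofReal_ne_zero.2 hαpos.ne'
  have hβabs : ‖(α : ℂ)‖ < 1 := by
    simp only [Complex.norm_real, Real.norm_eq_abs, abs_of_pos hαpos]; exact hα1
  have hwabs : 1 < ‖(α : ℂ)⁻¹‖ := by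
    rw [norm_inv]
    exact (one_lt_inv₀ (norm_pos_iff.2 hβ0)).2 hβabs
  have hD0 : (1 : ℂ) - (α : ℂ) ^ 2 ≠ 0 := by
    intro h
    have h2 : ((α : ℂ)) ^ 2 = 1 := by linear_combination -h
    have h3 : ‖(α : ℂ)‖ ^ 2 = 1 := by rw [← norm_pow, h2, norm_one]
    nlinarith [norm_nonneg (α : ℂ)]
  -- pointwise equality on the unit circle with the partial fraction decomposition
  have hEq : Set.EqOn (fun σ => -(Yf a α σ) * ((k₀ : ℂ) * Yd a α σ - Complex.I * Xd a α σ))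
      (fun σ =>
        (-2 * (a : ℂ) ^ 2 * (α : ℂ) ^ 2 / (1 - (α : ℂ) ^ 2) ^ 2) * (σ - (α : ℂ)) ^ (-1 : ℤ) +
        ((-(a : ℂ) ^ 2 * (α : ℂ) * (1 - (k₀ : ℂ)) / (1 - (α : ℂ) ^ 2)) * (σ - (α : ℂ)) ^ (-2 : ℤ) +
          (-(a : ℂ) ^ 2 * (α : ℂ) ^ 2 * (1 - (k₀ : ℂ))) * (σ - (α : ℂ)) ^ (-3 : ℤ)) +
        ((2 * (a : ℂ) ^ 2 * (α : ℂ) ^ 2 / (1 - (α : ℂ) ^ 2) ^ 2) * (σ - (α : ℂ)⁻¹) ^ (-1 : ℤ) +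
          ((-(a : ℂ) ^ 2 * (α : ℂ) * ((k₀ : ℂ) + 1) / (1 - (α : ℂ) ^ 2)) *
              (σ - (α : ℂ)⁻¹) ^ (-2 : ℤ) +
            ((a : ℂ) ^ 2 * ((k₀ : ℂ) + 1) / (α : ℂ) ^ 2) * (σ - (α : ℂ)⁻¹) ^ (-3 : ℤ))))
      (Metric.sphere (0 : ℂ) 1) := by
    intro σ hσ
    have habsσ : ‖σ‖ = 1 := by
      simpa [Metric.mem_sphere, dist_zero_right] using hσ
    have hσβ : σ - (α : ℂ) ≠ 0 := by
      intro h
      rw [sub_eq_zero] at h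
      rw [h] at habsσ
      exact absurd habsσ hβabs.ne
    have hσw : σ - (α : ℂ)⁻¹ ≠ 0 := by
      intro h
      rw [sub_eq_zero] at h
      rw [h] at habsσ
      exact absurd habsσ.symm hwabs.ne
    have h1 : 1 - (α : ℂ) * σ ≠ 0 := by
      intro h
      apply hσw
      have hbs : (α : ℂ) * σ = 1 := by linear_combination -h
      rw [sub_eq_zero]
      exact eq_inv_of_mul_eq_one_left (by linear_combination hbs)
    set u : ℂ := (1 - (α : ℂ) * σ)⁻¹ with hu
    set v : ℂ := (σ - (α : ℂ))⁻¹ with hv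
    set W : ℂ := (1 - (α : ℂ) ^ 2)⁻¹ with hWd
    set A : ℂ := ((α : ℂ))⁻¹ with hAd
    have hYf : Yf a α σ = -(a : ℂ) * (u + (α : ℂ) * v) := by
      rw [Yf, hu, hv]
      field_simp
      ring
    have hYd : Yd a α σ = -(a : ℂ) * (α : ℂ) * (u ^ 2 - v ^ 2) := by
      rw [Yd, hu, hv]
      field_simp
    have hXd : Xd a α σ = -Complex.I * (a : ℂ) * (α : ℂ) * (u ^ 2 + v ^ 2) := by
      rw [Xd, hu, hv]
      field_simp
    have hw1 : (σ - (α : ℂ)⁻¹)⁻¹ = -((α : ℂ) * u) := by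
      refine inv_eq_of_mul_eq_one_right ?_
      rw [hu]
      have h1' : 1 - σ * (α : ℂ) ≠ 0 := by rwa [mul_comm σ]
      field_simp
      ring
    have huv : (1 - (α : ℂ) ^ 2) * (u * v) = (α : ℂ) * u + v := by
      rw [hu, hv]
      field_simp
      ring
    have hW1 : (1 - (α : ℂ) ^ 2) * W = 1 := by
      rw [hWd]; exact mul_inv_cancel₀ hD0
    have hA1 : (α : ℂ) * A = 1 := by
      rw [hAd]; exact mul_inv_cancel₀ hβ0
    show -(Yf a α σ) * ((k₀ : ℂ) * Yd a α σ - Complex.I * Xd a α σ) = _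
    simp only [zpow_neg, zpow_one, show ((2:ℤ).toNat = 2) from rfl,
      show ((3:ℤ).toNat = 3) from rfl, zpow_ofNat, pow_one]
    simp only [div_eq_mul_inv, ← inv_pow]
    rw [hYf, hYd, hXd, hw1, ← hv, ← hWd, ← hAd]
    clear_value u v W A
    linear_combination
      ((a : ℂ) ^ 2 * (α : ℂ) * (u + (α : ℂ) * v) * (u ^ 2 + v ^ 2)) * Complex.I_sq +
      (-(((a : ℂ) ^ 2 * (α : ℂ) * ((1 - (k₀ : ℂ)) * ((α : ℂ) * W + v) +
          (α : ℂ) * ((k₀ : ℂ) + 1) * (W + u))) * W)) * huv +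
      (((a : ℂ) ^ 2 * (α : ℂ) * ((1 - (k₀ : ℂ)) * ((α : ℂ) * W + v) +
          (α : ℂ) * ((k₀ : ℂ) + 1) * (W + u))) * (u * v)) * hW1 +
      ((a : ℂ) ^ 2 * ((k₀ : ℂ) + 1) * u ^ 3 * (α : ℂ) * (A * (α : ℂ) + 1)) * hA1
  rw [circleIntegral.integral_congr zero_le_one hEq,
    mySix ((α : ℂ)) ((α : ℂ)⁻¹)
      (-2 * (a : ℂ) ^ 2 * (α : ℂ) ^ 2 / (1 - (α : ℂ) ^ 2) ^ 2)
      (-(a : ℂ) ^ 2 * (α : ℂ) * (1 - (k₀ : ℂ)) / (1 - (α : ℂ) ^ 2))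
      (-(a : ℂ) ^ 2 * (α : ℂ) ^ 2 * (1 - (k₀ : ℂ)))
      (2 * (a : ℂ) ^ 2 * (α : ℂ) ^ 2 / (1 - (α : ℂ) ^ 2) ^ 2)
      (-(a : ℂ) ^ 2 * (α : ℂ) * ((k₀ : ℂ) + 1) / (1 - (α : ℂ) ^ 2))
      ((a : ℂ) ^ 2 * ((k₀ : ℂ) + 1) / (α : ℂ) ^ 2) hβabs hwabs]
  -- final numeric identity
  have hkey : 2 * (a : ℂ) * (α : ℂ) = (R : ℂ) * (1 - (α : ℂ) ^ 2) := by
    have h := congrArg (fun x : ℝ => (x : ℂ)) key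
    push_cast at h
    linear_combination h
  have hc : -2 * (a : ℂ) ^ 2 * (α : ℂ) ^ 2 / (1 - (α : ℂ) ^ 2) ^ 2 = -(R : ℂ) ^ 2 / 2 := by
    rw [div_eq_div_iff (pow_ne_zero 2 hD0) two_ne_zero]
    linear_combination (-(R : ℂ) * (1 - (α : ℂ) ^ 2) - 2 * (a : ℂ) * (α : ℂ)) * hkey
  rw [hc]
  constructor
  · ring
  · have hπ : (Real.pi : ℂ) ≠ 0 := Complex.ofReal_ne_zero.2 Real.pi_ne_zero
    field_simp
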